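/- Equality in law of the two products of elementary matrices (Proposition 4.3): Let n ≥ 1 and let α_0,…,α_{n−1} be independent ℂ-valued random variables such that almost surely |α_k| < 1 for 0 ≤ k ≤ n−2 and |α_{n−1}| = 1, and such that the law of each α_k is invariant under every rotation z ↦ e^{iθ}z of ℂ. Then the random n×n matrices Θ^{(0)}(α_0)·Θ^{(1)}(α_1)⋯Θ^{(n−1)}(α_{n−1}) and Ξ^{(0)}(α_0)·Ξ^{(1)}(α_1)⋯Ξ^{(n−1)}(α_{n−1}) have the same distribution. -/

import Mathlib

open MeasureTheory Complex Finset
open scoped Real ComplexConjugate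

noncomputable section

/-- `ρ = sqrt(1 - |a|²)`. -/
def rho (a : ℂ) : ℝ := Real.sqrt (1 - ‖a‖ ^ 2)

/-- `Θ^{(k)}(α) = Id_k ⊕ [[conj α, ρ],[ρ, -α]] ⊕ Id_{n-k-2}`; for `k = n-1` only
the `(k,k)` entry `conj α` remains, encoding `Θ^{(n-1)}(α) = Id_{n-1} ⊕ (conj α)`. -/
def ThetaMat (n k : ℕ) (a : ℂ) : Matrix (Fin n) (Fin n) ℂ :=
  Matrix.of fun i j =>
    if (i : ℕ) = k ∧ (j : ℕ) = k then (starRingEnd ℂ) a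
    else if (i : ℕ) = k ∧ (j : ℕ) = k + 1 then (rho a : ℂ)
    else if (i : ℕ) = k + 1 ∧ (j : ℕ) = k then (rho a : ℂ)
    else if (i : ℕ) = k + 1 ∧ (j : ℕ) = k + 1 then -a
    else if i = j then 1 else 0

/-- `Ξ^{(k)}(α) = Id_k ⊕ [[α, ρ e^{iφ}],[ρ, -conj(α) e^{iφ}]] ⊕ Id_{n-k-2}` with
`e^{iφ} = (1-α)/(1-conj α)`; for `k = n-1` only the `(k,k)` entry `α` remains,
encoding `Ξ^{(n-1)}(α) = Id_{n-1} ⊕ (α)`. -/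
def XiMat (n k : ℕ) (a : ℂ) : Matrix (Fin n) (Fin n) ℂ :=
  Matrix.of fun i j =>
    if (i : ℕ) = k ∧ (j : ℕ) = k then a
    else if (i : ℕ) = k ∧ (j : ℕ) = k + 1 then
      (rho a : ℂ) * ((1 - a) / (1 - (starRingEnd ℂ) a))
    else if (i : ℕ) = k + 1 ∧ (j : ℕ) = k then (rho a : ℂ)
    else if (i : ℕ) = k + 1 ∧ (j : ℕ) = k + 1 then
      -(starRingEnd ℂ) a * ((1 - a) / (1 - (starRingEnd ℂ) a))
    else if i = j then 1 else 0

instance (n : ℕ) : MeasurableSpace (Matrix (Fin n) (Fin n) ℂ) :=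
  MeasurableSpace.pi

namespace KNaux

open scoped ENNReal

/-! ### Algebraic part -/

def phaseE (a : ℂ) : ℂ := (1 - a) / (1 - (starRingEnd ℂ) a)

lemma abs_phaseE {a : ℂ} (ha : a ≠ 1) : ‖phaseE a‖ = 1 := by
  have h1 : (1 : ℂ) - (starRingEnd ℂ) a ≠ 0 := by
    intro h
    apply ha
    have : (starRingEnd ℂ) a = 1 := by linear_combination -h
    simpa using congrArg (starRingEnd ℂ) this
  have h2 : ‖1 - (starRingEnd ℂ) a‖ = ‖1 - a‖ := by
    rw [show (1 : ℂ) - (starRingEnd ℂ) a = (starRingEnd ℂ) (1 - a) by rw [map_sub, map_one]]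
    exact Complex.norm_conj _
  rw [phaseE, norm_div, h2, div_self]
  rw [ne_eq, norm_eq_zero, sub_eq_zero]
  exact fun h => ha h.symm

def Dm (n m : ℕ) (c : ℂ) : Matrix (Fin n) (Fin n) ℂ :=
  Matrix.diagonal (fun i => if (i : ℕ) = m then c else 1)

set_option linter.unnecessarySeqFocus false in
lemma step1 {n m : ℕ} {c a : ℂ} (hc : ‖c‖ = 1) :
    Dm n m c * XiMat n m a
      = ThetaMat n m ((starRingEnd ℂ) c * (starRingEnd ℂ) a) * Dm n (m + 1) (c * phaseE a) := by
  have hcc : (starRingEnd ℂ) c * c = 1 := by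
    rw [mul_comm, Complex.mul_conj]
    norm_cast
    rw [Complex.normSq_eq_norm_sq, hc]; norm_num
  have hrho : rho ((starRingEnd ℂ) c * (starRingEnd ℂ) a) = rho a := by
    unfold rho
    rw [norm_mul, Complex.norm_conj, Complex.norm_conj, hc, one_mul]
  have hconj : (starRingEnd ℂ) ((starRingEnd ℂ) c * (starRingEnd ℂ) a) = c * a := by
    simp
  ext i j
  simp only [Dm, Matrix.diagonal_mul, Matrix.mul_diagonal]
  simp only [XiMat, ThetaMat, Matrix.of_apply, phaseE, hrho, hconj]
  by_cases him : (i : ℕ) = m <;> by_cases him1 : (i : ℕ) = m + 1 <;>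
    by_cases hjm : (j : ℕ) = m <;> by_cases hjm1 : (j : ℕ) = m + 1 <;>
    by_cases hij : i = j <;>
    simp_all [Fin.ext_iff] <;> ring_nf <;>
    first
      | rfl
      | omega
      | linear_combination ((starRingEnd ℂ) a * a * (1 - (starRingEnd ℂ) a)⁻¹ -
          (starRingEnd ℂ) a * (1 - (starRingEnd ℂ) a)⁻¹) * hcc

/-- the rolling phase `∏_{j<k} e(a j)`. -/
def Pph (a : ℕ → ℂ) (k : ℕ) : ℂ := ((List.range k).map fun j => phaseE (a j)).prod

lemma Pph_succ (a : ℕ → ℂ) (k : ℕ) : Pph a (k + 1) = Pph a k * phaseE (a k) := by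
  unfold Pph
  rw [List.range_succ, List.map_append, List.prod_append]
  simp

lemma abs_Pph {a : ℕ → ℂ} {k : ℕ} (ha : ∀ j, j < k → a j ≠ 1) :
    ‖Pph a k‖ = 1 := by
  unfold Pph
  rw [← normHom_apply, map_list_prod]
  apply List.prod_eq_one
  intro x hx
  simp only [List.map_map, List.mem_map, List.mem_range, Function.comp] at hx
  obtain ⟨j, hj, rfl⟩ := hx
  exact abs_phaseE (ha j hj)

lemma Pph_congr {a b : ℕ → ℂ} {t : ℕ} (h : ∀ j, j < t → a j = b j) : Pph a t = Pph b t := by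
  unfold Pph
  congr 1
  apply List.map_congr_left
  intro x hx
  rw [h x (List.mem_range.mp hx)]

lemma Dm_self (n : ℕ) (c : ℂ) : Dm n n c = 1 := by
  unfold Dm
  rw [show (fun i : Fin n => if (i : ℕ) = n then c else 1) = fun _ => (1 : ℂ) by
    funext i; rw [if_neg i.isLt.ne]]
  exact Matrix.diagonal_one

lemma telescope (n : ℕ) (a : ℕ → ℂ) (ha : ∀ k, k + 1 < n → a k ≠ 1) :
    ∀ t, t ≤ n →
      ((List.range t).map fun k =>
          ThetaMat n k ((starRingEnd ℂ) (Pph a k) * (starRingEnd ℂ) (a k))).prod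
        * Dm n t (Pph a t)
      = ((List.range t).map fun k => XiMat n k (a k)).prod := by
  intro t
  induction t with
  | zero =>
      intro _
      simp [Pph, Dm, Matrix.diagonal_one]
  | succ t ih =>
      intro ht
      have habs : ‖Pph a t‖ = 1 :=
        abs_Pph (fun j hj => ha j (by omega))
      rw [List.range_succ, List.map_append, List.prod_append,
        List.map_append, List.prod_append]
      simp only [List.map_cons, List.map_nil, List.prod_cons, List.prod_nil, mul_one]
      rw [Pph_succ, mul_assoc, ← step1 habs, ← mul_assoc, ih (by omega)]

lemma xi_prod_eq_theta_prod (n : ℕ) (a : ℕ → ℂ) (ha : ∀ k, k + 1 < n → a k ≠ 1) :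
    ((List.range n).map fun k => XiMat n k (a k)).prod
      = ((List.range n).map fun k =>
          ThetaMat n k ((starRingEnd ℂ) (Pph a k) * (starRingEnd ℂ) (a k))).prod := by
  rw [← telescope n a ha n le_rfl, Dm_self, mul_one]

/-! ### Conjugation invariance from rotation invariance -/

local notation "T2" => (2 * Real.pi)

lemma fact2pi : Fact (0 < 2 * Real.pi) := ⟨by positivity⟩

attribute [local instance] fact2pi

def tc (u : AddCircle T2) : ℂ := (AddCircle.toCircle u : ℂ)

lemma tc_continuous : Continuous tc :=
  continuous_subtype_val.comp AddCircle.continuous_toCircle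

lemma tc_coe (x : ℝ) : tc (x : AddCircle T2) = Complex.exp (Complex.I * x) := by
  rw [tc, AddCircle.toCircle_apply_mk, Circle.coe_exp]
  rw [div_self (by positivity : (2:ℝ) * Real.pi ≠ 0), one_mul, mul_comm]

lemma tc_add (u v : AddCircle T2) : tc (u + v) = tc u * tc v := by
  rw [tc, AddCircle.toCircle_add]; rfl

lemma tc_abs (u : AddCircle T2) : ‖tc u‖ = 1 := by
  induction u using QuotientAddGroup.induction_on
  rw [tc_coe, Complex.norm_exp]
  simp

lemma tc_neg (u : AddCircle T2) : tc (-u) = (starRingEnd ℂ) (tc u) := by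
  have h1 : tc (-u) * tc u = 1 := by
    rw [← tc_add, neg_add_cancel, tc, AddCircle.toCircle_zero]; rfl
  have h2 : (starRingEnd ℂ) (tc u) * tc u = 1 := by
    rw [mul_comm, Complex.mul_conj]
    norm_cast
    rw [Complex.normSq_eq_norm_sq, tc_abs]; norm_num
  have hu : tc u ≠ 0 := by
    intro h; rw [h, mul_zero] at h1; exact one_ne_zero h1.symm
  exact mul_right_cancel₀ hu (h1.trans h2.symm)

lemma exp_helper (r a : ℝ) :
    (starRingEnd ℂ) (r * Complex.exp (a * Complex.I))
      = Complex.exp (Complex.I * ((-(2 * a) : ℝ) : ℂ)) * (r * Complex.exp (a * Complex.I)) := by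
  rw [map_mul, Complex.conj_ofReal, ← Complex.exp_conj]
  rw [show (starRingEnd ℂ) ((a : ℂ) * Complex.I) = (-a : ℂ) * Complex.I by
    rw [map_mul, Complex.conj_I, Complex.conj_ofReal]; ring]
  rw [mul_comm (Complex.exp _) ((r:ℂ) * _), mul_assoc, ← Complex.exp_add]
  congr 2
  push_cast
  ring

lemma measurable_conj : Measurable (starRingEnd ℂ) := Complex.continuous_conj.measurable

/-- Conjugation invariance from full rotation invariance. -/
lemma conj_invariant (ν : Measure ℂ) [IsProbabilityMeasure ν]
    (h : ∀ θ : ℝ, Measure.map (fun z : ℂ => Complex.exp (Complex.I * θ) * z) ν = ν) :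
    Measure.map (starRingEnd ℂ) ν = ν := by
  classical
  have hconj : Measurable (starRingEnd ℂ) := measurable_conj
  have hrotmeas : ∀ c : ℂ, Measurable fun z : ℂ => c * z := fun c =>
    measurable_const.mul measurable_id
  have hrot' : ∀ (u : AddCircle T2) (B : Set ℂ), MeasurableSet B →
      ν ((fun z => tc u * z) ⁻¹' B) = ν B := by
    intro u B hB
    induction u using QuotientAddGroup.induction_on with
    | H x =>
      conv_rhs => rw [← h x]
      rw [Measure.map_apply (hrotmeas _) hB, tc_coe]
  have key : ∀ B : Set ℂ, MeasurableSet B →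
      ∫⁻ z, (∫⁻ u, B.indicator 1 (tc u * z) ∂(volume : Measure (AddCircle T2))) ∂ν
        = ENNReal.ofReal T2 * ν B := by
    intro B hB
    have hm : Measurable fun p : ℂ × (AddCircle T2) =>
        B.indicator (1 : ℂ → ℝ≥0∞) (tc p.2 * p.1) :=
      (Measurable.indicator measurable_const hB).comp
        ((tc_continuous.measurable.comp measurable_snd).mul measurable_fst)
    rw [MeasureTheory.lintegral_lintegral_swap hm.aemeasurable]
    have hu : ∀ u : AddCircle T2, (∫⁻ z, B.indicator 1 (tc u * z) ∂ν) = ν B := by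
      intro u
      have hfun : (fun z : ℂ => B.indicator (1 : ℂ → ℝ≥0∞) (tc u * z))
          = ((fun z : ℂ => tc u * z) ⁻¹' B).indicator 1 := by
        funext z
        rw [Set.indicator_apply, Set.indicator_apply, Set.mem_preimage]
        simp
      rw [hfun, lintegral_indicator_one ((hrotmeas _) hB), hrot' u B hB]
    simp_rw [hu]
    rw [lintegral_const, AddCircle.measure_univ, mul_comm]
  ext B hB
  rw [Measure.map_apply hconj hB]
  have hBc : MeasurableSet ((starRingEnd ℂ) ⁻¹' B) := hconj hB
  have hpt : ∀ z : ℂ,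
      (∫⁻ u, ((starRingEnd ℂ) ⁻¹' B).indicator 1 (tc u * z) ∂(volume : Measure (AddCircle T2)))
        = ∫⁻ u, B.indicator 1 (tc u * z) ∂(volume : Measure (AddCircle T2)) := by
    intro z
    have e1 : ∀ u : AddCircle T2, ((starRingEnd ℂ) ⁻¹' B).indicator (1 : ℂ → ℝ≥0∞) (tc u * z)
        = B.indicator 1 (tc (-u) * (starRingEnd ℂ) z) := by
      intro u
      rw [tc_neg, Set.indicator_apply, Set.indicator_apply, Set.mem_preimage, map_mul]
      simp
    simp_rw [e1]
    have hgm : ∀ w : ℂ, Measurable fun v : AddCircle T2 =>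
        B.indicator (1 : ℂ → ℝ≥0∞) (tc v * w) :=
      fun w => (Measurable.indicator measurable_const hB).comp
        (tc_continuous.measurable.mul measurable_const)
    have e3 := lintegral_map (μ := (volume : Measure (AddCircle T2)))
      (f := fun v : AddCircle T2 => B.indicator (1 : ℂ → ℝ≥0∞) (tc v * (starRingEnd ℂ) z))
      (hgm _) measurable_neg
    rw [Measure.map_neg_eq_self] at e3
    rw [← e3]
    rcases eq_or_ne z 0 with rfl | hz
    · simp
    · set a := Complex.arg z with ha
      have h0 := Complex.norm_mul_exp_arg_mul_I z
      rw [← ha] at h0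
      have hzc : (starRingEnd ℂ) z = tc (((-(2 * a)) : ℝ) : AddCircle T2) * z := by
        rw [tc_coe]
        conv_lhs => rw [← h0]
        conv_rhs => rw [← h0]
        exact exp_helper _ _
      rw [hzc]
      have e2 : ∀ u : AddCircle T2,
          tc u * (tc (((-(2 * a)) : ℝ) : AddCircle T2) * z)
            = tc (u + (((-(2 * a)) : ℝ) : AddCircle T2)) * z := by
        intro u; rw [tc_add]; ring
      simp_rw [e2]
      have e4 := lintegral_map (μ := (volume : Measure (AddCircle T2)))
        (f := fun v : AddCircle T2 => B.indicator (1 : ℂ → ℝ≥0∞) (tc v * z))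
        (hgm _) (measurable_add_const (((-(2 * a)) : ℝ) : AddCircle T2))
      rw [map_add_right_eq_self] at e4
      rw [← e4]
  have h1 := key _ hBc
  have h2 := key _ hB
  have h3 : ENNReal.ofReal T2 * ν ((starRingEnd ℂ) ⁻¹' B) = ENNReal.ofReal T2 * ν B := by
    rw [← h1, ← h2]
    exact lintegral_congr fun z => hpt z
  have hT0 : ENNReal.ofReal T2 ≠ 0 := by
    simp only [ne_eq, ENNReal.ofReal_eq_zero, not_le]
    positivity
  exact (ENNReal.mul_right_inj hT0 ENNReal.ofReal_ne_top).mp h3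

lemma conj_rot_invariant (ν : Measure ℂ) [IsProbabilityMeasure ν]
    (h : ∀ θ : ℝ, Measure.map (fun z : ℂ => Complex.exp (Complex.I * θ) * z) ν = ν)
    {c : ℂ} (hc : ‖c‖ = 1) :
    Measure.map (fun z => c * (starRingEnd ℂ) z) ν = ν := by
  have hce : Complex.exp (Complex.I * (Complex.arg c : ℂ)) = c := by
    rw [mul_comm]
    conv_rhs => rw [← Complex.norm_mul_exp_arg_mul_I c]
    rw [hc, Complex.ofReal_one, one_mul]
  have hm : Measurable fun z : ℂ => c * z := measurable_const.mul measurable_id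
  have hsplit : (fun z : ℂ => c * (starRingEnd ℂ) z)
      = (fun z : ℂ => c * z) ∘ (starRingEnd ℂ) := rfl
  rw [hsplit, ← Measure.map_map hm measurable_conj, conj_invariant ν h, ← hce, h]

/-! ### One-coordinate update of a product measure -/

lemma map_update_pi {m : ℕ} (ν : Fin (m+1) → Measure ℂ) [∀ i, IsProbabilityMeasure (ν i)]
    (k : Fin (m+1)) (φ : (Fin m → ℂ) → ℂ → ℂ) (hφ : Measurable (Function.uncurry φ))
    (hg : ∀ᵐ y ∂(Measure.pi fun j => ν (k.succAbove j)), Measure.map (φ y) (ν k) = ν k) :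
    Measure.map (fun z : Fin (m+1) → ℂ =>
        Function.update z k (φ (fun j => z (k.succAbove j)) (z k))) (Measure.pi ν)
      = Measure.pi ν := by
  have hpres := measurePreserving_piFinSuccAbove ν k
  set e := MeasurableEquiv.piFinSuccAbove (fun _ : Fin (m+1) => ℂ) k with he
  have hS' : MeasurePreserving (fun q : (Fin m → ℂ) × ℂ => (q.1, φ q.1 q.2))
      ((Measure.pi fun j => ν (k.succAbove j)).prod (ν k))
      ((Measure.pi fun j => ν (k.succAbove j)).prod (ν k)) :=
    MeasurePreserving.skew_product (MeasurePreserving.id _) hφ hg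
  have hS : MeasurePreserving (fun p : ℂ × (Fin m → ℂ) => (φ p.2 p.1, p.2))
      ((ν k).prod (Measure.pi fun j => ν (k.succAbove j)))
      ((ν k).prod (Measure.pi fun j => ν (k.succAbove j))) :=
    (Measure.measurePreserving_swap.comp hS').comp
      (Measure.measurePreserving_swap (μ := ν k) (ν := Measure.pi fun j => ν (k.succAbove j)))
  have hfinal := ((hpres.symm e).comp hS).comp hpres
  have hcomp : (fun z : Fin (m+1) → ℂ =>
      Function.update z k (φ (fun j => z (k.succAbove j)) (z k)))
      = ⇑e.symm ∘ (fun p : ℂ × (Fin m → ℂ) => (φ p.2 p.1, p.2)) ∘ ⇑e := by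
    funext z
    show _ = e.symm (φ ((e z).2) ((e z).1), (e z).2)
    have h1 : e z = (z k, fun j => z (k.succAbove j)) := rfl
    have h2 : ∀ x y, e.symm (x, y) = k.insertNth x y := fun _ _ => rfl
    rw [h1, h2]
    exact (Fin.insertNth_removeNth k _ z).symm
  rw [hcomp, ← Function.comp_assoc]
  exact hfinal.map_eq

/-! ### Measurability helpers -/

lemma measurable_phaseE : Measurable phaseE := by
  unfold phaseE
  exact (measurable_const.sub measurable_id).mul
    ((measurable_const.sub measurable_conj).inv)

lemma measurable_Pph_dite {d : ℕ} (t : ℕ) :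
    Measurable fun y : Fin d → ℂ => Pph (fun j => if h : j < d then y ⟨j, h⟩ else 0) t := by
  induction t with
  | zero =>
      have : (fun y : Fin d → ℂ => Pph (fun j => if h : j < d then y ⟨j, h⟩ else 0) 0)
          = fun _ => 1 := by
        funext y; simp [Pph]
      rw [this]; exact measurable_const
  | succ t ih =>
      have : (fun y : Fin d → ℂ => Pph (fun j => if h : j < d then y ⟨j, h⟩ else 0) (t+1))
          = fun y => Pph (fun j => if h : j < d then y ⟨j, h⟩ else 0) t
              * phaseE (if h : t < d then y ⟨t, h⟩ else 0) := by
        funext y; rw [Pph_succ]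
      rw [this]
      apply ih.mul
      by_cases h : t < d
      · simp only [dif_pos h]
        exact measurable_phaseE.comp (measurable_pi_apply _)
      · simp only [dif_neg h]
        exact measurable_const

lemma measurable_entry {α : Type*} [MeasurableSpace α] {N : ℕ}
    {f : α → Matrix (Fin N) (Fin N) ℂ} (hf : Measurable f) (i j : Fin N) :
    Measurable fun x => f x i j :=
  (measurable_pi_apply j).comp ((measurable_pi_apply i).comp hf)

lemma measurable_matMul {α : Type*} [MeasurableSpace α] {N : ℕ}
    {f g : α → Matrix (Fin N) (Fin N) ℂ} (hf : Measurable f) (hg : Measurable g) :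
    Measurable fun x => f x * g x := by
  apply measurable_pi_lambda
  intro i
  apply measurable_pi_lambda
  intro j
  simp only [Matrix.mul_apply]
  exact Finset.measurable_sum _ fun k _ => (measurable_entry hf i k).mul (measurable_entry hg k j)

lemma measurable_list_prod {α ι : Type*} [MeasurableSpace α] {N : ℕ} (L : List ι)
    (f : ι → α → Matrix (Fin N) (Fin N) ℂ) (hf : ∀ b, Measurable (f b)) :
    Measurable fun x => (L.map fun b => f b x).prod := by
  induction L with
  | nil => simp only [List.map_nil, List.prod_nil]; exact measurable_const
  | cons b L ih =>
      simp only [List.map_cons, List.prod_cons]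
      exact measurable_matMul (hf b) ih

lemma measurable_rho : Measurable fun a : ℂ => ((rho a : ℝ) : ℂ) :=
  Complex.measurable_ofReal.comp (Real.continuous_sqrt.measurable.comp
    (measurable_const.sub (continuous_norm.measurable.pow_const 2)))

lemma measurable_ThetaMat (n k : ℕ) : Measurable fun a : ℂ => ThetaMat n k a := by
  apply measurable_pi_lambda
  intro i
  apply measurable_pi_lambda
  intro j
  simp only [ThetaMat, Matrix.of_apply]
  split_ifs <;>
    first
      | exact measurable_conj
      | exact measurable_rho
      | exact measurable_id.neg
      | exact measurable_const

lemma measurable_XiMat (n k : ℕ) : Measurable fun a : ℂ => XiMat n k a := by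
  apply measurable_pi_lambda
  intro i
  apply measurable_pi_lambda
  intro j
  simp only [XiMat, Matrix.of_apply]
  have hph : Measurable fun a : ℂ => (1 - a) / (1 - (starRingEnd ℂ) a) := measurable_phaseE
  split_ifs <;>
    first
      | exact measurable_id
      | exact measurable_rho.mul hph
      | exact measurable_rho
      | exact (measurable_conj.neg).mul hph
      | exact measurable_const

/-! ### The coordinate transformation and its invariance -/

def extz {m : ℕ} (z : Fin (m+1) → ℂ) : ℕ → ℂ :=
  fun j => if h : j < m + 1 then z ⟨j, h⟩ else 0

def TT {m : ℕ} (z : Fin (m+1) → ℂ) : Fin (m+1) → ℂ :=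
  fun k => (starRingEnd ℂ) (Pph (extz z) k.val) * (starRingEnd ℂ) (z k)

def gph {m : ℕ} (t : ℕ) (y : Fin m → ℂ) : ℂ :=
  (starRingEnd ℂ) (Pph (fun j => if h : j < m then y ⟨j, h⟩ else 0) t)

def Uk {m : ℕ} (k : Fin (m+1)) (z : Fin (m+1) → ℂ) : Fin (m+1) → ℂ :=
  Function.update z k (gph k.val (fun j => z (k.succAbove j)) * (starRingEnd ℂ) (z k))

def Tl {m : ℕ} (l : ℕ) (z : Fin (m+1) → ℂ) : Fin (m+1) → ℂ :=
  fun k => if m + 1 ≤ k.val + l then TT z k else z k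

lemma gph_eq {m : ℕ} (k : Fin (m+1)) (z : Fin (m+1) → ℂ) :
    gph k.val (fun j => z (k.succAbove j)) = (starRingEnd ℂ) (Pph (extz z) k.val) := by
  unfold gph
  congr 1
  apply Pph_congr
  intro j hj
  have hjm : j < m := lt_of_lt_of_le hj (Nat.lt_succ_iff.mp k.isLt)
  rw [dif_pos hjm, extz, dif_pos (by omega : j < m + 1)]
  show z (k.succAbove ⟨j, hjm⟩) = z ⟨j, by omega⟩
  congr 1
  rw [Fin.succAbove_of_castSucc_lt k ⟨j, hjm⟩ (by rw [Fin.lt_def]; simpa using hj)]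
  rfl

lemma Tl_zero {m : ℕ} : Tl (m := m) 0 = id := by
  funext z k
  simp only [Tl, id]
  rw [if_neg]
  omega

lemma Tl_last {m : ℕ} : Tl (m := m) (m + 1) = TT := by
  funext z k
  simp only [Tl]
  rw [if_pos]
  omega

lemma Tl_succ {m : ℕ} (l : ℕ) (hl : l ≤ m) :
    Tl (m := m) (l + 1) = Uk ⟨m - l, by omega⟩ ∘ Tl l := by
  funext z k
  show Tl (l+1) z k = Uk ⟨m - l, by omega⟩ (Tl l z) k
  by_cases hk : (k : ℕ) = m - l
  · have hkk : (⟨m - l, by omega⟩ : Fin (m+1)) = k := Fin.ext (by simp [hk])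
    rw [hkk, Uk, Function.update_self, gph_eq k (Tl l z)]
    have h1 : Tl l z k = z k := by
      simp only [Tl]
      rw [if_neg (by omega)]
    have h2 : Pph (extz (Tl l z)) k.val = Pph (extz z) k.val := by
      apply Pph_congr
      intro j hj
      simp only [extz]
      rw [dif_pos (by omega : j < m + 1), dif_pos (by omega : j < m + 1)]
      simp only [Tl]
      rw [if_neg (by omega)]
    rw [h1, h2]
    simp only [Tl]
    rw [if_pos (by omega)]
    rfl
  · rw [Uk, Function.update_of_ne (fun h => hk (by rw [h]))]
    by_cases hc : m + 1 ≤ (k : ℕ) + l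
    · simp only [Tl]
      rw [if_pos (by omega : m + 1 ≤ (k : ℕ) + (l + 1)), if_pos hc]
    · simp only [Tl]
      rw [if_neg (by omega : ¬ m + 1 ≤ (k : ℕ) + (l + 1)), if_neg hc]

lemma measurable_Pph_extz {m : ℕ} (t : ℕ) :
    Measurable fun z : Fin (m+1) → ℂ => Pph (extz z) t := by
  exact measurable_Pph_dite (d := m + 1) t

lemma measurable_TT {m : ℕ} : Measurable (TT (m := m)) := by
  apply measurable_pi_lambda
  intro k
  exact (measurable_conj.comp (measurable_Pph_extz k.val)).mul
    (measurable_conj.comp (measurable_pi_apply k))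

lemma measurable_gph {m : ℕ} (t : ℕ) : Measurable (gph (m := m) t) :=
  measurable_conj.comp (measurable_Pph_dite t)

lemma measurable_Uk {m : ℕ} (k : Fin (m+1)) : Measurable (Uk (m := m) k) := by
  apply measurable_pi_lambda
  intro j
  simp only [Uk, Function.update_apply]
  by_cases h : j = k
  · simp only [if_pos h]
    exact ((measurable_gph k.val).comp
        (measurable_pi_lambda _ fun i => measurable_pi_apply _)).mul
      (measurable_conj.comp (measurable_pi_apply k))
  · simp only [if_neg h]
    exact measurable_pi_apply j

lemma measurable_Tl {m : ℕ} (l : ℕ) : Measurable (Tl (m := m) l) := by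
  apply measurable_pi_lambda
  intro k
  simp only [Tl]
  by_cases h : m + 1 ≤ k.val + l
  · simp only [if_pos h]
    exact (measurable_pi_apply k).comp measurable_TT
  · simp only [if_neg h]
    exact measurable_pi_apply k

lemma map_Tl {m : ℕ} (ν : Fin (m+1) → Measure ℂ) [∀ i, IsProbabilityMeasure (ν i)]
    (hrot : ∀ (k : Fin (m+1)) (θ : ℝ),
      Measure.map (fun z : ℂ => Complex.exp (Complex.I * θ) * z) (ν k) = ν k)
    (hlt : ∀ k : Fin (m+1), (k : ℕ) + 1 < m + 1 → ∀ᵐ z ∂(ν k), ‖z‖ < 1) :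
    ∀ l, l ≤ m + 1 → Measure.map (Tl l) (Measure.pi ν) = Measure.pi ν := by
  intro l
  induction l with
  | zero =>
      intro _
      rw [Tl_zero, Measure.map_id]
  | succ l ih =>
      intro hl
      have hl' : l ≤ m := by omega
      rw [Tl_succ l hl', ← Measure.map_map (measurable_Uk _) (measurable_Tl _), ih (by omega)]
      set k0 : Fin (m+1) := ⟨m - l, by omega⟩ with hk0
      have hφ : Measurable (Function.uncurry fun (y : Fin m → ℂ) (x : ℂ) =>
          gph (m := m) k0.val y * (starRingEnd ℂ) x) :=
        ((measurable_gph _).comp measurable_fst).mul (measurable_conj.comp measurable_snd)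
      have hae : ∀ᵐ y ∂(Measure.pi fun j => ν (k0.succAbove j)),
          ∀ j : Fin m, (j : ℕ) < (k0 : ℕ) → y j ≠ 1 := by
        rw [MeasureTheory.ae_all_iff]
        intro j
        by_cases hj : (j : ℕ) < (k0 : ℕ)
        · have hsj : (k0.succAbove j : ℕ) = (j : ℕ) := by
            rw [Fin.succAbove_of_castSucc_lt]
            · simp
            · rw [Fin.lt_def]; simpa using hj
          have hco : ∀ᵐ x ∂(ν (k0.succAbove j)), ‖x‖ < 1 := by
            apply hlt
            omega
          have hco1 : ∀ᵐ x ∂(ν (k0.succAbove j)), x ≠ 1 := by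
            filter_upwards [hco] with x hx h1
            rw [h1] at hx
            simp at hx
          filter_upwards [(Measure.tendsto_eval_ae_ae.eventually hco1)] with y hy _
          exact hy
        · filter_upwards with y hj'
          exact absurd hj' hj
      have hg : ∀ᵐ y ∂(Measure.pi fun j => ν (k0.succAbove j)),
          Measure.map (fun x => gph (m := m) k0.val y * (starRingEnd ℂ) x) (ν k0) = ν k0 := by
        filter_upwards [hae] with y hy
        apply conj_rot_invariant _ (hrot k0)
        rw [gph, Complex.norm_conj]
        apply abs_Pph
        intro j hj
        have hjm : j < m := by
          have := k0.isLt
          omega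
        rw [dif_pos hjm]
        exact hy ⟨j, hjm⟩ hj
      exact map_update_pi ν k0 _ hφ hg


lemma finRange_prod_eq {m : ℕ} (M : ℕ → ℂ → Matrix (Fin (m+1)) (Fin (m+1)) ℂ)
    (z : Fin (m+1) → ℂ) :
    ((List.finRange (m+1)).map fun k => M k.val (z k)).prod
      = ((List.range (m+1)).map fun k => M k (extz z k)).prod := by
  have h1 : (fun k : Fin (m+1) => M k.val (z k)) = (fun k : ℕ => M k (extz z k)) ∘ Fin.val := by
    funext k
    simp only [Function.comp]
    rw [extz, dif_pos k.isLt]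
  rw [h1, ← List.map_map, show (List.finRange (m+1)).map Fin.val = List.range (m+1) from
    List.ext_getElem (by simp) (by simp)]

end KNaux

open KNaux in
/-- **Proposition 4.3** -/
theorem theta_prod_eq_law_xi_prod
    {Ω : Type*} [MeasurableSpace Ω] (P : Measure Ω) [IsProbabilityMeasure P]
    (n : ℕ) (hn : 1 ≤ n) (α : Fin n → Ω → ℂ)
    (hmeas : ∀ k, Measurable (α k))
    (hindep : ProbabilityTheory.iIndepFun α P)
    (habs : ∀ᵐ ω ∂P,
      (∀ k : Fin n, (k : ℕ) + 1 < n → ‖α k ω‖ < 1) ∧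
        ‖α ⟨n - 1, by omega⟩ ω‖ = 1)
    (hrot : ∀ (k : Fin n) (θ : ℝ),
      Measure.map (fun z : ℂ => Complex.exp (Complex.I * θ) * z)
          (Measure.map (α k) P) = Measure.map (α k) P) :
    Measure.map
        (fun ω => ((List.finRange n).map fun k => ThetaMat n k.val (α k ω)).prod) P =
      Measure.map
        (fun ω => ((List.finRange n).map fun k => XiMat n k.val (α k ω)).prod) P := by
  classical
  obtain ⟨m, rfl⟩ : ∃ m, n = m + 1 := ⟨n - 1, by omega⟩
  set ν : Fin (m+1) → Measure ℂ := fun k => Measure.map (α k) P with hν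
  haveI : ∀ k, IsProbabilityMeasure (ν k) := fun k =>
    Measure.isProbabilityMeasure_map (hmeas k).aemeasurable
  set αvec : Ω → (Fin (m+1) → ℂ) := fun ω k => α k ω with hαvec
  have hαvecm : Measurable αvec := measurable_pi_lambda _ fun k => hmeas k
  have hpi : Measure.map αvec P = Measure.pi ν := by
    symm
    apply Measure.pi_eq
    intro s hs
    rw [Measure.map_apply hαvecm (MeasurableSet.univ_pi hs)]
    have hpre : αvec ⁻¹' (Set.univ.pi s) = ⋂ k, α k ⁻¹' s k := by
      ext ω
      simp [hαvec, Set.mem_univ_pi, Set.mem_iInter]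
    rw [hpre,
      show (⋂ k, α k ⁻¹' s k) = ⋂ k ∈ Finset.univ, α k ⁻¹' s k by simp,
      hindep.measure_inter_preimage_eq_mul Finset.univ (fun i _ => hs i)]
    apply Finset.prod_congr rfl
    intro k _
    rw [hν]
    rw [Measure.map_apply (hmeas k) (hs k)]
  have hF : Measurable fun z : Fin (m+1) → ℂ =>
      ((List.finRange (m+1)).map fun k => ThetaMat (m+1) k.val (z k)).prod :=
    measurable_list_prod _ _ fun k => (measurable_ThetaMat _ _).comp (measurable_pi_apply k)
  have hG : Measurable fun z : Fin (m+1) → ℂ =>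
      ((List.finRange (m+1)).map fun k => XiMat (m+1) k.val (z k)).prod :=
    measurable_list_prod _ _ fun k => (measurable_XiMat _ _).comp (measurable_pi_apply k)
  rw [show (fun ω => ((List.finRange (m+1)).map fun k => ThetaMat (m+1) k.val (α k ω)).prod)
      = (fun z : Fin (m+1) → ℂ =>
          ((List.finRange (m+1)).map fun k => ThetaMat (m+1) k.val (z k)).prod) ∘ αvec from rfl,
    show (fun ω => ((List.finRange (m+1)).map fun k => XiMat (m+1) k.val (α k ω)).prod)
      = (fun z : Fin (m+1) → ℂ =>
          ((List.finRange (m+1)).map fun k => XiMat (m+1) k.val (z k)).prod) ∘ αvec from rfl,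
    ← Measure.map_map hF hαvecm, ← Measure.map_map hG hαvecm, hpi]
  have hco : ∀ k : Fin (m+1), (k : ℕ) + 1 < m + 1 → ∀ᵐ x ∂(ν k), ‖x‖ < 1 := by
    intro k hk
    have hms : MeasurableSet {x : ℂ | ‖x‖ < 1} :=
      continuous_norm.measurable measurableSet_Iio
    have h2 : ∀ᵐ x ∂(Measure.map (α k) P), x ∈ {x : ℂ | ‖x‖ < 1} :=
      (ae_map_iff (hmeas k).aemeasurable hms).mpr
        (by filter_upwards [habs] with ω h; exact h.1 k hk)
    exact h2
  have hrotν : ∀ (k : Fin (m+1)) (θ : ℝ),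
      Measure.map (fun z : ℂ => Complex.exp (Complex.I * θ) * z) (ν k) = ν k :=
    fun k θ => hrot k θ
  have hae : ∀ᵐ z ∂(Measure.pi ν),
      ∀ k : Fin (m+1), (k : ℕ) + 1 < m + 1 → ‖z k‖ < 1 := by
    rw [MeasureTheory.ae_all_iff]
    intro k
    by_cases hk : (k : ℕ) + 1 < m + 1
    · filter_upwards [Measure.tendsto_eval_ae_ae.eventually (hco k hk)] with z h _
      exact h
    · filter_upwards with z h
      exact absurd h hk
  have hGF : ∀ᵐ z ∂(Measure.pi ν),
      ((List.finRange (m+1)).map fun k => XiMat (m+1) k.val (z k)).prod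
        = ((fun z : Fin (m+1) → ℂ =>
            ((List.finRange (m+1)).map fun k => ThetaMat (m+1) k.val (z k)).prod) ∘ TT) z := by
    filter_upwards [hae] with z hz
    have hz1 : ∀ j, j + 1 < m + 1 → extz z j ≠ 1 := by
      intro j hj
      rw [extz, dif_pos (by omega : j < m + 1)]
      intro h1
      have h2 := hz ⟨j, by omega⟩ (by simpa using hj)
      rw [h1] at h2
      simp at h2
    show _ = ((List.finRange (m+1)).map fun k => ThetaMat (m+1) k.val (TT z k)).prod
    rw [finRange_prod_eq (XiMat (m+1)) z, xi_prod_eq_theta_prod (m+1) (extz z) hz1,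
      finRange_prod_eq (ThetaMat (m+1)) (TT z)]
    congr 1
    apply List.map_congr_left
    intro j hjm
    rw [List.mem_range] at hjm
    have h1 : extz (TT z) j
        = (starRingEnd ℂ) (Pph (extz z) j) * (starRingEnd ℂ) (z ⟨j, hjm⟩) := by
      rw [extz, dif_pos hjm]; rfl
    have h2 : extz z j = z ⟨j, hjm⟩ := by rw [extz, dif_pos hjm]
    rw [h1, h2]
  symm
  rw [Measure.map_congr hGF, ← Measure.map_map hF measurable_TT, ← Tl_last,
    map_Tl ν hrotν hco (m+1) le_rfl]
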